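/- Let b : 𝕋^d → ℂ have Fourier coefficients satisfying |b_k| ≤ D e^{−ρ⟨k⟩} for some D, ρ > 0, and for ℓ ∈ ℤ^d, j = (j₁,...,j_p) ∈ (ℤ^d)^p, set a_{ℓ;j} = b_{ℓ − j₁ − ⋯ − j_p}. Then for every R > 0 there is a constant c_R such that |a_{ℓ;j}| ≤ c_R (μ₃/(μ₃ + μ₁ − μ₂))^R, where μ₁ ≥ μ₂ ≥ μ₃ are the three largest values among ⟨ℓ⟩, ⟨j₁⟩, ..., ⟨j_p⟩; i.e., the coefficients satisfy the abstract decay hypothesis with θ = 0 and ν = 0. -/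

import Mathlib

open scoped BigOperators

noncomputable section

/-- The weight `⟨j⟩ = max(1, |j¹|, ..., |j^d|)` for `j ∈ ℤ^d`. -/
def wt {d : ℕ} (j : Fin d → ℤ) : ℕ :=
  max 1 (Finset.univ.sup fun i => (j i).natAbs)

/-- `mu k n` is the `n`-th largest value among `⟨k₁⟩, ..., ⟨k_q⟩`
(equal to `1` if `n > q`). -/
def mu {q d : ℕ} (k : Fin q → Fin d → ℤ) (n : ℕ) : ℕ :=
  if n ≤ q then
    ((Multiset.map (fun i => wt (k i)) Finset.univ.val).sort (· ≤ ·)).getD (q - n) 1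
  else 1

/-- `A_θ(k) = μ₂^θ μ₃^{1−θ} / (μ₂^θ μ₃^{1−θ} + μ₁ − μ₂)`. -/
def Atheta {q d : ℕ} (θ : ℝ) (k : Fin q → Fin d → ℤ) : ℝ :=
  ((mu k 2 : ℝ) ^ θ * (mu k 3 : ℝ) ^ (1 - θ)) /
    ((mu k 2 : ℝ) ^ θ * (mu k 3 : ℝ) ^ (1 - θ) + (mu k 1 : ℝ) - (mu k 2 : ℝ))

def nrm {d : ℕ} (f : Fin d → ℤ) : ℕ := Finset.univ.sup fun i => (f i).natAbs

lemma one_le_wt {d : ℕ} (f : Fin d → ℤ) : 1 ≤ wt f := le_max_left _ _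

lemma nrm_le_wt {d : ℕ} (f : Fin d → ℤ) : nrm f ≤ wt f := le_max_right _ _

lemma wt_le {d : ℕ} (f : Fin d → ℤ) {n : ℕ} (h1 : 1 ≤ n) (h2 : nrm f ≤ n) : wt f ≤ n :=
  max_le h1 h2

lemma natAbs_le_nrm {d : ℕ} (f : Fin d → ℤ) (i : Fin d) : (f i).natAbs ≤ nrm f :=
  Finset.le_sup (f := fun i => (f i).natAbs) (Finset.mem_univ i)

lemma nrm_add_le {d : ℕ} (a b : Fin d → ℤ) : nrm (a + b) ≤ nrm a + nrm b := by
  apply Finset.sup_le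
  intro i _
  exact le_trans (Int.natAbs_add_le (a i) (b i))
    (add_le_add (natAbs_le_nrm a i) (natAbs_le_nrm b i))

lemma nrm_sub_le {d : ℕ} (a b : Fin d → ℤ) : nrm (a - b) ≤ nrm a + nrm b := by
  apply Finset.sup_le
  intro i _
  exact le_trans (Int.natAbs_sub_le (a i) (b i))
    (add_le_add (natAbs_le_nrm a i) (natAbs_le_nrm b i))

lemma nrm_sum_le {d : ℕ} {ι : Type*} [DecidableEq ι] (s : Finset ι) (f : ι → Fin d → ℤ) :
    nrm (∑ i ∈ s, f i) ≤ ∑ i ∈ s, nrm (f i) := by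
  induction s using Finset.induction_on with
  | empty => simp [nrm]
  | insert _ _ hx ih =>
      rw [Finset.sum_insert hx, Finset.sum_insert hx]
      exact le_trans (nrm_add_le _ _) (Nat.add_le_add_left ih _)

lemma sorted_getD_mono (l : List ℕ) (hs : l.Pairwise (· ≤ ·)) {a b : ℕ}
    (hab : a ≤ b) (hb : b < l.length) : l.getD a 1 ≤ l.getD b 1 := by
  have ha : a < l.length := lt_of_le_of_lt hab hb
  rw [List.getD_eq_getElem l 1 ha, List.getD_eq_getElem l 1 hb]
  exact hs.rel_get_of_le (show (⟨a, ha⟩ : Fin l.length) ≤ ⟨b, hb⟩ from hab)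

lemma mem_le_sorted_getD (l : List ℕ) (hs : l.Pairwise (· ≤ ·)) {x n : ℕ}
    (hx : x ∈ l) (hn : l.length = n + 1) : x ≤ l.getD n 1 := by
  obtain ⟨i, hi, rfl⟩ := List.mem_iff_getElem.mp hx
  rw [← List.getD_eq_getElem l 1 hi]
  exact sorted_getD_mono l hs (by omega) (by omega)

lemma key_analytic (D ρ R P w x t : ℝ) (hD : 0 < D) (hρ : 0 < ρ) (hR : 0 < R)
    (hP : 1 ≤ P) (ht : 1 ≤ t) (hx : 0 ≤ x) (hw1 : 1 ≤ w) (hw2 : x - (P-1)*t ≤ w) :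
    D * Real.exp (-ρ * w) ≤ (D * max ((1+P)^R) ((4*R*P/ρ)^R)) * (t/(t+x)) ^ R := by
  have htx : 0 < t + x := by linarith
  have hbase : 0 < t / (t + x) := div_pos (by linarith) htx
  have hA : 0 ≤ (t / (t + x)) ^ R := (Real.rpow_pos_of_pos hbase R).le
  rcases le_or_gt x (P * t) with h | h
  · -- small x case
    have h1 : (1:ℝ) ≤ (1 + P) * (t / (t + x)) := by
      rw [← mul_div_assoc, le_div_iff₀ htx]
      nlinarith
    have h2 : (1:ℝ) ≤ (1 + P) ^ R * (t / (t + x)) ^ R := by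
      rw [← Real.mul_rpow (by linarith) hbase.le]
      exact Real.one_le_rpow h1 hR.le
    have e1 : Real.exp (-ρ * w) ≤ 1 := Real.exp_le_one_iff.mpr (by nlinarith)
    calc D * Real.exp (-ρ * w) ≤ D := by nlinarith [Real.exp_pos (-ρ*w)]
      _ ≤ D * ((1 + P) ^ R * (t / (t + x)) ^ R) := le_mul_of_one_le_right hD.le h2
      _ ≤ (D * max ((1+P)^R) ((4*R*P/ρ)^R)) * (t/(t+x)) ^ R := by
          rw [mul_assoc D]
          exact mul_le_mul_of_nonneg_left
            (mul_le_mul_of_nonneg_right (le_max_left _ _) hA) hD.le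
  · -- large x case
    have hxpos : 0 < x := lt_of_le_of_lt (by positivity) h
    have hPpos : 0 < P := by linarith
    have hwx : x / P ≤ w := by rw [div_le_iff₀ hPpos]; nlinarith
    have hxw : x ≤ w * P := (div_le_iff₀ hPpos).mp hwx
    have e1 : Real.exp (-ρ * w) ≤ Real.exp (-(ρ/P) * x) := by
      apply Real.exp_le_exp.mpr
      have h1 : (ρ/P) * x ≤ (ρ/P) * (w * P) := mul_le_mul_of_nonneg_left hxw (by positivity)
      have h2 : (ρ/P) * (w * P) = ρ * w := by field_simp
      nlinarith
    set ε : ℝ := ρ / (2 * R * P) with hε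
    have hεpos : 0 < ε := by positivity
    have hεx : (ε * x) ^ R ≤ Real.exp ((ρ/(2*P)) * x) := by
      have h1 : ε * x ≤ Real.exp (ε * x) := by
        nlinarith [Real.add_one_le_exp (ε * x)]
      calc (ε * x) ^ R ≤ (Real.exp (ε * x)) ^ R :=
            Real.rpow_le_rpow (by positivity) h1 hR.le
        _ = Real.exp (ε * x * R) := (Real.exp_mul _ _).symm
        _ = Real.exp ((ρ/(2*P)) * x) := by
            congr 1
            field_simp [hε]
            rw [hε]; field_simp
    have h2x : (2*x) ^ R = (2/ε) ^ R * (ε*x) ^ R := by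
      rw [← Real.mul_rpow (by positivity) (by positivity)]
      congr 1
      field_simp
    have hCpos : (0:ℝ) < (4*R*P/ρ) ^ R := Real.rpow_pos_of_pos (by positivity) R
    have hkey : Real.exp (-(ρ/P) * x) * (2*x) ^ R ≤ (4*R*P/ρ) ^ R := by
      have h2ε : (2:ℝ)/ε = 4*R*P/ρ := by field_simp [hε]; rw [hε]; field_simp; norm_num
      rw [h2x, h2ε]
      calc Real.exp (-(ρ/P) * x) * ((4*R*P/ρ) ^ R * (ε*x) ^ R)
          ≤ Real.exp (-(ρ/P) * x) * ((4*R*P/ρ) ^ R * Real.exp ((ρ/(2*P)) * x)) := by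
            apply mul_le_mul_of_nonneg_left _ (Real.exp_pos _).le
            exact mul_le_mul_of_nonneg_left hεx hCpos.le
        _ = (4*R*P/ρ) ^ R * Real.exp (-(ρ/(2*P)) * x) := by
            rw [mul_left_comm, ← Real.exp_add]
            congr 1
            ring
        _ ≤ (4*R*P/ρ) ^ R * 1 := by
            apply mul_le_mul_of_nonneg_left _ hCpos.le
            apply Real.exp_le_one_iff.mpr
            have : 0 ≤ (ρ/(2*P)) * x := by positivity
            linarith
        _ = (4*R*P/ρ) ^ R := mul_one _
    have hfrac : (1:ℝ)/(2*x) ≤ t/(t+x) := by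
      rw [div_le_div_iff₀ (by positivity) htx]
      nlinarith
    have hAfrac : ((2*x)⁻¹) ^ R ≤ (t/(t+x)) ^ R := by
      rw [← one_div]
      exact Real.rpow_le_rpow (by positivity) hfrac hR.le
    have h2xR : (0:ℝ) < (2*x) ^ R := Real.rpow_pos_of_pos (by positivity) R
    have hfin : Real.exp (-ρ * w) ≤ (4*R*P/ρ) ^ R * (t/(t+x)) ^ R := by
      have step : Real.exp (-(ρ/P) * x) ≤ (4*R*P/ρ) ^ R * ((2*x)⁻¹) ^ R := by
        rw [Real.inv_rpow (by positivity), ← div_eq_mul_inv, le_div_iff₀ h2xR]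
        exact hkey
      calc Real.exp (-ρ * w) ≤ Real.exp (-(ρ/P) * x) := e1
        _ ≤ (4*R*P/ρ) ^ R * ((2*x)⁻¹) ^ R := step
        _ ≤ (4*R*P/ρ) ^ R * (t/(t+x)) ^ R := mul_le_mul_of_nonneg_left hAfrac hCpos.le
    calc D * Real.exp (-ρ * w) ≤ D * ((4*R*P/ρ) ^ R * (t/(t+x)) ^ R) :=
          mul_le_mul_of_nonneg_left hfin hD.le
      _ ≤ (D * max ((1+P)^R) ((4*R*P/ρ)^R)) * (t/(t+x)) ^ R := by
          rw [mul_assoc D]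
          exact mul_le_mul_of_nonneg_left
            (mul_le_mul_of_nonneg_right (le_max_right _ _) hA) hD.le

theorem stmt9 (d p : ℕ) (hd : 1 ≤ d) (hp : 1 ≤ p)
    (b : (Fin d → ℤ) → ℂ) (D ρ : ℝ) (hD : 0 < D) (hρ : 0 < ρ)
    (hb : ∀ k : Fin d → ℤ, ‖b k‖ ≤ D * Real.exp (-ρ * (wt k : ℝ))) :
    ∀ R : ℝ, 0 < R → ∃ c : ℝ, 0 < c ∧
      ∀ (ℓ : Fin d → ℤ) (j : Fin p → Fin d → ℤ),
        ‖b (ℓ - ∑ i, j i)‖ ≤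
          c * ((mu (Fin.cons ℓ j) 3 : ℝ) /
            ((mu (Fin.cons ℓ j) 3 : ℝ) + (mu (Fin.cons ℓ j) 1 : ℝ) -
              (mu (Fin.cons ℓ j) 2 : ℝ))) ^ R := by
  intro R hR
  refine ⟨D * max ((1+(p:ℝ))^R) ((4*R*(p:ℝ)/ρ)^R), ?_, ?_⟩
  · apply mul_pos hD
    exact lt_max_of_lt_left (Real.rpow_pos_of_pos (by positivity) R)
  intro ℓ j
  set k : Fin (p+1) → Fin d → ℤ := Fin.cons ℓ j with hk
  set M : Fin d → ℤ := ℓ - ∑ i, j i with hM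
  set S : Multiset ℕ := Multiset.map (fun i => wt (k i)) Finset.univ.val with hS
  set L : List ℕ := S.sort (· ≤ ·) with hL
  have hsorted : L.Pairwise (· ≤ ·) := Multiset.pairwise_sort _ _
  have hlen : L.length = p + 1 := by
    rw [hL, Multiset.length_sort, hS, Multiset.card_map]
    simp
  have hmemL : ∀ x, x ∈ L ↔ ∃ m, wt (k m) = x := by
    intro x
    rw [hL, Multiset.mem_sort, hS, Multiset.mem_map]
    simp
  -- mu values
  have hmu1 : mu k 1 = L.getD p 1 := by
    rw [mu, if_pos (by omega), ← hS, ← hL, (by omega : p+1-1 = p)]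
  have hmu2 : mu k 2 = L.getD (p-1) 1 := by
    rw [mu, if_pos (by omega), ← hS, ← hL, (by omega : p+1-2 = p-1)]
  -- every wt is ≤ mu 1
  have hwt_le_mu1 : ∀ m, wt (k m) ≤ mu k 1 := by
    intro m
    rw [hmu1]
    exact mem_le_sorted_getD L hsorted ((hmemL _).mpr ⟨m, rfl⟩) hlen
  -- mu 1 is attained
  have hmu1_mem : ∃ m, wt (k m) = mu k 1 := by
    rw [hmu1]
    apply (hmemL _).mp
    rw [List.getD_eq_getElem L 1 (by omega)]
    exact List.getElem_mem _
  -- one ≤ elements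
  have hone_mem : ∀ x ∈ L, 1 ≤ x := by
    intro x hx
    obtain ⟨m, rfl⟩ := (hmemL x).mp hx
    exact one_le_wt _
  have h1mu2 : 1 ≤ mu k 2 := by
    rw [hmu2]
    apply hone_mem
    rw [List.getD_eq_getElem L 1 (by omega)]
    exact List.getElem_mem _
  have h1mu3 : 1 ≤ mu k 3 := by
    rcases le_or_gt 3 (p+1) with h3 | h3
    · rw [mu, if_pos h3]
      apply hone_mem
      rw [List.getD_eq_getElem L 1 (by omega)]
      exact List.getElem_mem _
    · rw [mu, if_neg (by omega)]
  have hmu32 : mu k 3 ≤ mu k 2 := by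
    rcases le_or_gt 3 (p+1) with h3 | h3
    · rw [mu, if_pos h3, hmu2]
      exact sorted_getD_mono L hsorted (by omega) (by omega)
    · rw [mu, if_neg (by omega)]
      exact h1mu2
  have hmu21 : mu k 2 ≤ mu k 1 := by
    rw [hmu1, hmu2]
    exact sorted_getD_mono L hsorted (by omega) (by omega)
  -- total sum
  have hT : (∑ m : Fin (p+1), wt (k m)) = L.sum := by
    rw [Finset.sum, ← hS, ← Multiset.sum_coe, hL, Multiset.sort_eq]
  -- sum bound
  have hsum : (∑ m : Fin (p+1), wt (k m)) ≤ mu k 1 + mu k 2 + (p-1) * mu k 3 := by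
    rw [hT, ← List.sum_take_add_sum_drop L (p-1)]
    have hdrop : L.drop (p-1) = [L[p-1]'(by omega), L[p]'(by omega)] := by
      rw [List.drop_eq_getElem_cons (by omega : p-1 < L.length),
        (by omega : p-1+1 = p),
        List.drop_eq_getElem_cons (by omega : p < L.length),
        List.drop_eq_nil_of_le (by omega)]
    have htake : (L.take (p-1)).sum ≤ (p-1) * mu k 3 := by
      have hbd : ∀ x ∈ L.take (p-1), x ≤ mu k 3 := by
        intro x hx
        obtain ⟨i, hi, rfl⟩ := List.mem_take_iff_getElem.mp hx
        have hip : i < p - 1 := lt_of_lt_of_le hi (min_le_left _ _)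
        have h3 : 3 ≤ p + 1 := by omega
        rw [mu, if_pos h3, List.getD_eq_getElem L 1 (by omega)]
        exact hsorted.rel_get_of_le
          (show (⟨i, by omega⟩ : Fin L.length) ≤ ⟨p+1-3, by omega⟩ from by
            simp only [Fin.mk_le_mk]; omega)
      calc (L.take (p-1)).sum ≤ (L.take (p-1)).length • (mu k 3) :=
            List.sum_le_card_nsmul _ _ hbd
        _ = (p-1) * mu k 3 := by
            rw [List.length_take, smul_eq_mul]
            congr 1
            omega
    have hd1 : L.getD (p-1) 1 = L[p-1]'(by omega) := List.getD_eq_getElem L 1 (by omega)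
    have hd2 : L.getD p 1 = L[p]'(by omega) := List.getD_eq_getElem L 1 (by omega)
    have hdsum : (L.drop (p-1)).sum = L.getD (p-1) 1 + L.getD p 1 := by
      rw [hdrop, hd1, hd2]; simp
    rw [hdsum, ← hmu1, ← hmu2]
    omega
  -- momentum bound: for each m, 2 * wt (k m) ≤ wt M + total sum
  have hmom : ∀ m, 2 * wt (k m) ≤ wt M + ∑ m : Fin (p+1), wt (k m) := by
    intro m
    have hTsplit : (∑ m : Fin (p+1), wt (k m)) = wt ℓ + ∑ i : Fin p, wt (j i) := by
      rw [Fin.sum_univ_succ]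
      simp [hk]
    induction m using Fin.cases with
    | zero =>
        have hℓ : ℓ = M + ∑ i, j i := by rw [hM]; abel
        have h1 : wt ℓ ≤ wt M + ∑ i : Fin p, wt (j i) := by
          apply wt_le
          · have := one_le_wt M; omega
          rw [hℓ]
          refine le_trans (nrm_add_le _ _) ?_
          refine add_le_add (nrm_le_wt M) ?_
          refine le_trans (nrm_sum_le _ _) ?_
          exact Finset.sum_le_sum fun i _ => nrm_le_wt (j i)
        have hk0 : wt (k 0) = wt ℓ := by rw [hk]; simp
        rw [hk0, hTsplit]
        omega
    | succ i =>
        have hkis : wt (k i.succ) = wt (j i) := by rw [hk]; simp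
        have hji : j i = (ℓ - M) - ∑ i' ∈ Finset.univ.erase i, j i' := by
          have hsum' : (∑ i', j i') = j i + ∑ i' ∈ Finset.univ.erase i, j i' :=
            (Finset.add_sum_erase _ _ (Finset.mem_univ i)).symm
          rw [hM, hsum']
          abel
        have h1 : wt (j i) ≤ wt ℓ + wt M + ∑ i' ∈ Finset.univ.erase i, wt (j i') := by
          apply wt_le
          · have := one_le_wt ℓ; omega
          rw [hji]
          refine le_trans (nrm_sub_le _ _) ?_
          refine add_le_add (le_trans (nrm_sub_le _ _)
            (add_le_add (nrm_le_wt ℓ) (nrm_le_wt M))) ?_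
          refine le_trans (nrm_sum_le _ _) ?_
          exact Finset.sum_le_sum fun i' _ => nrm_le_wt (j i')
        have h2 : (∑ i' : Fin p, wt (j i')) =
            wt (j i) + ∑ i' ∈ Finset.univ.erase i, wt (j i') :=
          (Finset.add_sum_erase _ _ (Finset.mem_univ i)).symm
        rw [hkis, hTsplit]
        omega
  -- main inequality
  have hmain : mu k 1 ≤ wt M + mu k 2 + (p-1) * mu k 3 := by
    obtain ⟨m, hm⟩ := hmu1_mem
    have := hmom m
    rw [hm] at this
    omega
  -- apply analytic lemma
  have hmem_hb := hb M
  have h1wtM : 1 ≤ wt M := one_le_wt M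
  have happ := key_analytic D ρ R (p:ℝ) (wt M : ℝ) ((mu k 1 : ℝ) - (mu k 2 : ℝ))
    (mu k 3 : ℝ) hD hρ hR (by exact_mod_cast hp) (by exact_mod_cast h1mu3)
    (by have := hmu21; simp only [sub_nonneg]; exact_mod_cast this)
    (by exact_mod_cast h1wtM)
    (by
      have hcast : (mu k 1 : ℝ) ≤ (wt M : ℝ) + (mu k 2 : ℝ) + ((p:ℝ)-1) * (mu k 3 : ℝ) := by
        have : ((p-1 : ℕ) : ℝ) = (p:ℝ) - 1 := by
          have := hp; push_cast [Nat.cast_sub hp]; ring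
        calc (mu k 1 : ℝ) ≤ ((wt M + mu k 2 + (p-1) * mu k 3 : ℕ) : ℝ) := by
              exact_mod_cast hmain
          _ = (wt M : ℝ) + (mu k 2 : ℝ) + ((p:ℝ)-1) * (mu k 3 : ℝ) := by
              push_cast [Nat.cast_sub hp]; ring
      linarith)
  have hfrac_eq : (mu k 3 : ℝ) + (mu k 1 : ℝ) - (mu k 2 : ℝ) =
      (mu k 3 : ℝ) + ((mu k 1 : ℝ) - (mu k 2 : ℝ)) := by ring
  calc ‖b M‖ ≤ D * Real.exp (-ρ * (wt M : ℝ)) := hmem_hb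
    _ ≤ (D * max ((1+(p:ℝ))^R) ((4*R*(p:ℝ)/ρ)^R)) *
        ((mu k 3 : ℝ) / ((mu k 3 : ℝ) + ((mu k 1 : ℝ) - (mu k 2 : ℝ)))) ^ R := happ
    _ = (D * max ((1+(p:ℝ))^R) ((4*R*(p:ℝ)/ρ)^R)) *
        ((mu k 3 : ℝ) / ((mu k 3 : ℝ) + (mu k 1 : ℝ) - (mu k 2 : ℝ))) ^ R := by
          rw [hfrac_eq]
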